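/- Domain wall boundary conditions evaluation as a consequence of the two determinant results: for n×n matrices, ∏ᵢ₌₁ⁿ(xᵢ+yᵢ) · ∏_{i<j}((xᵢ+yⱼ)/(xᵢ−xⱼ)) · det( ∏_{k=1}^{n−j}(xᵢ−a_k) / ∏_{k=1}^{n−j+1}(1−b_k xᵢ) ) · ∏_{i=1}^n ∏_{j=1}^n (1−bⱼxᵢ) = ∏ᵢ₌₁ⁿ(xᵢ+yᵢ) · ∏_{1≤i<j≤n}(xᵢ+yⱼ)(1−aᵢbⱼ). -/

import Mathlib

open Finset

namespace DomainWall

variable {F : Type*} [Field F]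

/-- previous index in `Fin n` (total, maps `0` to `0`). -/
def prev {n : ℕ} (j : Fin n) : Fin n :=
  ⟨j.val - 1, Nat.lt_of_le_of_lt (Nat.sub_le _ _) j.isLt⟩

/-- Adding to each column a multiple of the previous column does not change
the determinant (the coefficient at column `0` is required to be `0`). -/
lemma det_colops {n : ℕ} (A : Matrix (Fin n) (Fin n) F) (c : Fin n → F)
    (hc : ∀ j : Fin n, j.val = 0 → c j = 0) :
    Matrix.det (Matrix.of fun i j : Fin n => A i j + c j * A i (prev j)) = A.det := by
  set U : Matrix (Fin n) (Fin n) F :=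
    Matrix.of fun k j : Fin n => if k = j then 1 else if k.val + 1 = j.val then c j else 0 with hU
  have hmul : A * U = Matrix.of fun i j : Fin n => A i j + c j * A i (prev j) := by
    ext i j
    rw [Matrix.mul_apply]
    have hsummand : ∀ k : Fin n, A i k * U k j =
        (if k = j then A i k else 0) + (if k.val + 1 = j.val then c j * A i k else 0) := by
      intro k
      by_cases h2 : k.val + 1 = j.val
      · have h1 : k ≠ j := by intro e; rw [e] at h2; omega
        simp [hU, h1, h2]; ring
      · by_cases h1 : k = j
        · simp [hU, h1, h2]
        · simp [hU, h1, h2]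
    rw [Finset.sum_congr rfl fun k _ => hsummand k, Finset.sum_add_distrib,
      Finset.sum_ite_eq' Finset.univ j (fun k => A i k)]
    rcases Nat.eq_zero_or_pos j.val with h0 | hpos
    · have hno : ∀ k : Fin n, ¬ (k.val + 1 = j.val) := fun k => by omega
      rw [Finset.sum_congr rfl fun k _ => if_neg (hno k)]
      simp [hc j h0]
    · have hiff : ∀ k : Fin n, (k.val + 1 = j.val) ↔ k = prev j := by
        intro k; rw [Fin.ext_iff]; simp only [prev]; omega
      rw [Finset.sum_congr rfl fun k _ => if_congr (hiff k) rfl rfl,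
        Finset.sum_ite_eq' Finset.univ (prev j) (fun k => c j * A i k)]
      simp
  have hU1 : U.det = 1 := by
    rw [Matrix.det_of_upperTriangular]
    · simp [hU]
    · intro i j hij
      have h1 : i ≠ j := (ne_of_gt hij)
      have h2 : ¬ (i.val + 1 = j.val) := by
        have : j < i := hij
        rw [Fin.lt_def] at this; omega
      simp [hU, h1, h2]
  rw [← hmul, Matrix.det_mul, hU1, mul_one]

/-- One pass of column operations, pulling out the factors `1 - a⬝b`. -/
lemma det_A_step {n : ℕ} (p : ℕ) (x : Fin n → F) (a b : ℕ → F) :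
    Matrix.det (Matrix.of fun i j : Fin n =>
      (∏ k ∈ Finset.Icc 1 (n - (j.val + 1)), (x i - a k)) *
        ∏ k ∈ Finset.Icc (n - j.val + p + 1) n, (1 - b k * x i)) =
    (∏ j : Fin n, if p + 1 ≤ j.val then 1 - a (n - j.val) * b (n - j.val + p + 1) else 1) *
      Matrix.det (Matrix.of fun i j : Fin n =>
        (∏ k ∈ Finset.Icc 1 (n - (j.val + 1)), (x i - a k)) *
          ∏ k ∈ Finset.Icc (n - j.val + p + 2) n, (1 - b k * x i)) := by
  set Ap : Matrix (Fin n) (Fin n) F := Matrix.of fun i j : Fin n =>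
      (∏ k ∈ Finset.Icc 1 (n - (j.val + 1)), (x i - a k)) *
        ∏ k ∈ Finset.Icc (n - j.val + p + 1) n, (1 - b k * x i) with hAp
  set c : Fin n → F := fun j => if p + 1 ≤ j.val then b (n - j.val + p + 1) else 0 with hcdef
  have hc : ∀ j : Fin n, j.val = 0 → c j = 0 := by
    intro j h0; simp [hcdef, h0]
  have key : (Matrix.of fun i j : Fin n => Ap i j + c j * Ap i (prev j)) =
      Matrix.of fun i j : Fin n =>
        (if p + 1 ≤ j.val then 1 - a (n - j.val) * b (n - j.val + p + 1) else 1) *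
        ((∏ k ∈ Finset.Icc 1 (n - (j.val + 1)), (x i - a k)) *
          ∏ k ∈ Finset.Icc (n - j.val + p + 2) n, (1 - b k * x i)) := by
    ext i j
    have hj := j.isLt
    simp only [Matrix.of_apply, hAp, hcdef, prev]
    by_cases hp : p + 1 ≤ j.val
    · rw [if_pos hp, if_pos hp]
      have e1 : n - (j.val - 1 + 1) = n - j.val := by omega
      have e2 : n - (j.val - 1) + p + 1 = n - j.val + p + 2 := by omega
      rw [e1, e2]
      have hmn : n - j.val + p + 1 ≤ n := by omega
      have hsplitD : ∏ k ∈ Finset.Icc (n - j.val + p + 1) n, (1 - b k * x i) =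
          (1 - b (n - j.val + p + 1) * x i) *
            ∏ k ∈ Finset.Icc (n - j.val + p + 2) n, (1 - b k * x i) := by
        have : Finset.Icc (n - j.val + p + 2) n = Finset.Ioc (n - j.val + p + 1) n := by
          ext m; simp; omega
        rw [this]; exact (Finset.mul_prod_Ioc_eq_prod_Icc hmn).symm
      have hsplitN : ∏ k ∈ Finset.Icc 1 (n - j.val), (x i - a k) =
          (∏ k ∈ Finset.Icc 1 (n - (j.val + 1)), (x i - a k)) * (x i - a (n - j.val)) := by
        have h1 : n - j.val = (n - (j.val + 1)) + 1 := by omega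
        rw [h1, Finset.prod_Icc_succ_top (by omega), ← h1]
      rw [hsplitD, hsplitN]
      ring
    · rw [if_neg hp, if_neg hp]
      have e1 : Finset.Icc (n - j.val + p + 1) n = ∅ := Finset.Icc_eq_empty (by omega)
      have e2 : Finset.Icc (n - j.val + p + 2) n = ∅ := Finset.Icc_eq_empty (by omega)
      rw [e1, e2]
      simp
  calc Matrix.det Ap
      = Matrix.det (Matrix.of fun i j : Fin n => Ap i j + c j * Ap i (prev j)) :=
        (det_colops Ap c hc).symm
    _ = _ := by
        rw [key]
        exact Matrix.det_mul_row _ _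

/-- Iterating the column operations all the way. -/
lemma det_A_full {n : ℕ} (x : Fin n → F) (a b : ℕ → F) :
    Matrix.det (Matrix.of fun i j : Fin n =>
      (∏ k ∈ Finset.Icc 1 (n - (j.val + 1)), (x i - a k)) *
        ∏ k ∈ Finset.Icc (n - j.val + 1) n, (1 - b k * x i)) =
    (∏ p ∈ Finset.range n, ∏ j : Fin n,
        if p + 1 ≤ j.val then 1 - a (n - j.val) * b (n - j.val + p + 1) else 1) *
      Matrix.det (Matrix.of fun i j : Fin n =>
        ∏ k ∈ Finset.Icc 1 (n - (j.val + 1)), (x i - a k)) := by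
  have gen : ∀ N : ℕ,
      Matrix.det (Matrix.of fun i j : Fin n =>
        (∏ k ∈ Finset.Icc 1 (n - (j.val + 1)), (x i - a k)) *
          ∏ k ∈ Finset.Icc (n - j.val + 1) n, (1 - b k * x i)) =
      (∏ p ∈ Finset.range N, ∏ j : Fin n,
          if p + 1 ≤ j.val then 1 - a (n - j.val) * b (n - j.val + p + 1) else 1) *
        Matrix.det (Matrix.of fun i j : Fin n =>
          (∏ k ∈ Finset.Icc 1 (n - (j.val + 1)), (x i - a k)) *
            ∏ k ∈ Finset.Icc (n - j.val + N + 1) n, (1 - b k * x i)) := by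
    intro N
    induction N with
    | zero => simp
    | succ N ih =>
      rw [ih, det_A_step N x a b, Finset.prod_range_succ]
      have e : ∀ m : ℕ, m + N + 2 = m + (N + 1) + 1 := fun m => by omega
      simp only [e]
      ring
  rw [gen n]
  congr 1
  congr 1
  ext i j
  have hj := j.isLt
  have : Finset.Icc (n - j.val + n + 1) n = ∅ := Finset.Icc_eq_empty (by omega)
  simp [this]

open Polynomial in
/-- Newton-basis (reversed) Vandermonde determinant. -/
lemma det_newton {n : ℕ} (x : Fin n → F) (a : ℕ → F) :
    Matrix.det (Matrix.of fun i j : Fin n =>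
      ∏ k ∈ Finset.Icc 1 (n - (j.val + 1)), (x i - a k)) =
    ∏ i : Fin n, ∏ j ∈ Finset.Ioi i, (x i - x j) := by
  have h1 : Matrix.det (Matrix.of fun i j : Fin n =>
      ∏ k ∈ Finset.Icc 1 (n - (j.val + 1)), (x i - a k)) =
      Matrix.det (Matrix.of fun i j : Fin n =>
        ∏ k ∈ Finset.Icc 1 j.val, (x (Fin.rev i) - a k)) := by
    rw [← Matrix.det_submatrix_equiv_self Fin.revPerm
      (Matrix.of fun i j : Fin n => ∏ k ∈ Finset.Icc 1 (n - (j.val + 1)), (x i - a k))]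
    congr 1
    ext i j
    have hj := j.isLt
    have h : n - (n - (j.val + 1) + 1) = j.val := by omega
    simp [Matrix.submatrix_apply, Fin.revPerm, Fin.val_rev, h]
  rw [h1]
  have h2 : Matrix.det (Matrix.of fun i j : Fin n =>
        ∏ k ∈ Finset.Icc 1 j.val, (x (Fin.rev i) - a k)) =
      Matrix.det (Matrix.vandermonde fun i => x (Fin.rev i)) := by
    rw [Matrix.det_eval_matrixOfPolynomials_eq_det_vandermonde (fun i => x (Fin.rev i))
      (fun j : Fin n => ∏ k ∈ Finset.Icc 1 j.val, (X - C (a k)))]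
    · congr 1; ext i j
      simp [eval_prod]
    · intro i
      rw [natDegree_prod_of_monic _ _ (fun k _ => monic_X_sub_C (a k))]
      simp [natDegree_X_sub_C]
    · intro i
      exact monic_prod_of_monic _ _ (fun k _ => monic_X_sub_C (a k))
  rw [h2, Matrix.det_vandermonde]
  rw [Finset.prod_sigma' Finset.univ (fun i => Finset.Ioi i)
    (fun i j => x (Fin.rev j) - x (Fin.rev i)),
    Finset.prod_sigma' Finset.univ (fun i => Finset.Ioi i) (fun i j => x i - x j)]
  refine Finset.prod_nbij' (fun q => ⟨Fin.rev q.2, Fin.rev q.1⟩)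
    (fun q => ⟨Fin.rev q.2, Fin.rev q.1⟩) ?_ ?_ ?_ ?_ ?_ <;>
    simp [Fin.rev_lt_rev, Fin.rev_rev]

/-- Reindexing of the extracted factors. -/
lemma prod_D {n : ℕ} (a b : ℕ → F) :
    (∏ p ∈ Finset.range n, ∏ j : Fin n,
        if p + 1 ≤ j.val then 1 - a (n - j.val) * b (n - j.val + p + 1) else 1) =
    ∏ q ∈ Finset.univ.filter (fun q : Fin n × Fin n => q.1 < q.2),
      (1 - a (q.1.val + 1) * b (q.2.val + 1)) := by
  rcases n with _ | m
  · simp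
  set n := m + 1 with hndef
  have hn : 0 < n := Nat.succ_pos m
  have step1 : (∏ p ∈ Finset.range n, ∏ j : Fin n,
        if p + 1 ≤ j.val then 1 - a (n - j.val) * b (n - j.val + p + 1) else 1) =
      ∏ q ∈ (Finset.range n ×ˢ (Finset.univ : Finset (Fin n))).filter
          (fun q => q.1 + 1 ≤ q.2.val),
        (1 - a (n - q.2.val) * b (n - q.2.val + q.1 + 1)) := by
    rw [Finset.prod_filter, Finset.prod_product]
  rw [step1]
  refine Finset.prod_nbij'
    (fun q => ((⟨n - 1 - q.2.val, by omega⟩ : Fin n),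
               (⟨(n - q.2.val + q.1) % n, Nat.mod_lt _ hn⟩ : Fin n)))
    (fun q => (q.2.val - q.1.val - 1, (⟨n - 1 - q.1.val, by omega⟩ : Fin n)))
    ?_ ?_ ?_ ?_ ?_
  · rintro ⟨p, j⟩ hq
    simp only [Finset.mem_filter, Finset.mem_product, Finset.mem_range, Finset.mem_univ,
      true_and, and_true] at hq
    obtain ⟨hp, hpj⟩ := hq
    have hj := j.isLt
    have hmod : (n - j.val + p) % n = n - j.val + p := Nat.mod_eq_of_lt (by omega)
    simp only [Finset.mem_filter, Finset.mem_univ, true_and, Fin.mk_lt_mk, hmod]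
    omega
  · rintro ⟨i, j⟩ hq
    simp only [Finset.mem_filter, Finset.mem_univ, true_and] at hq
    rw [Fin.lt_def] at hq
    have hj := j.isLt
    simp only [Finset.mem_filter, Finset.mem_product, Finset.mem_range, Finset.mem_univ,
      true_and, and_true]
    omega
  · rintro ⟨p, j⟩ hq
    simp only [Finset.mem_filter, Finset.mem_product, Finset.mem_range, Finset.mem_univ,
      true_and, and_true] at hq
    obtain ⟨hp, hpj⟩ := hq
    have hj := j.isLt
    have hmod : (n - j.val + p) % n = n - j.val + p := Nat.mod_eq_of_lt (by omega)
    refine Prod.ext ?_ ?_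
    · show (n - j.val + p) % n - (n - 1 - j.val) - 1 = p
      rw [hmod]; omega
    · show (⟨n - 1 - (n - 1 - j.val), by omega⟩ : Fin n) = j
      rw [Fin.ext_iff]; show n - 1 - (n - 1 - j.val) = j.val; omega
  · rintro ⟨i, j⟩ hq
    simp only [Finset.mem_filter, Finset.mem_univ, true_and] at hq
    rw [Fin.lt_def] at hq
    have hj := j.isLt
    have hi := i.isLt
    have hmod : (n - (n - 1 - i.val) + (j.val - i.val - 1)) % n
        = n - (n - 1 - i.val) + (j.val - i.val - 1) := Nat.mod_eq_of_lt (by omega)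
    refine Prod.ext ?_ ?_
    · show (⟨n - 1 - (n - 1 - i.val), by omega⟩ : Fin n) = i
      rw [Fin.ext_iff]; show n - 1 - (n - 1 - i.val) = i.val; omega
    · show (⟨(n - (n - 1 - i.val) + (j.val - i.val - 1)) % n, _⟩ : Fin n) = j
      rw [Fin.ext_iff]
      show (n - (n - 1 - i.val) + (j.val - i.val - 1)) % n = j.val
      rw [hmod]; omega
  · rintro ⟨p, j⟩ hq
    simp only [Finset.mem_filter, Finset.mem_product, Finset.mem_range, Finset.mem_univ,
      true_and, and_true] at hq
    obtain ⟨hp, hpj⟩ := hq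
    have hj := j.isLt
    have hmod : (n - j.val + p) % n = n - j.val + p := Nat.mod_eq_of_lt (by omega)
    show (1 - a (n - j.val) * b (n - j.val + p + 1))
        = (1 - a ((n - 1 - j.val) + 1) * b ((n - j.val + p) % n + 1))
    rw [hmod, show n - 1 - j.val + 1 = n - j.val from by omega]

/-- Products over pairs `i < j` equal iterated products over `Ioi`. -/
lemma prod_pairs {n : ℕ} (f : Fin n → Fin n → F) :
    ∏ p ∈ Finset.univ.filter (fun p : Fin n × Fin n => p.1 < p.2), f p.1 p.2
    = ∏ i : Fin n, ∏ j ∈ Finset.Ioi i, f i j := by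
  rw [Finset.prod_sigma' Finset.univ (fun i => Finset.Ioi i) f]
  refine Finset.prod_nbij' (fun q : Fin n × Fin n => (⟨q.1, q.2⟩ : Σ _ : Fin n, Fin n))
    (fun q => (q.1, q.2)) ?_ ?_ ?_ ?_ ?_ <;> simp

end DomainWall

open DomainWall in
/-- Domain wall boundary conditions evaluation, as a consequence of the two determinant
results: `∏ᵢ(xᵢ+yᵢ) ∏_{i<j}((xᵢ+yⱼ)/(xᵢ−xⱼ)) · det(...) · ∏_{i,j}(1−bⱼxᵢ)
 = ∏ᵢ(xᵢ+yᵢ) ∏_{i<j}(xᵢ+yⱼ)(1−aᵢbⱼ)`. -/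
theorem domain_wall_evaluation {F : Type*} [Field F] (n : ℕ) (x y : Fin n → F)
    (a b : ℕ → F)
    (hx : ∀ i j : Fin n, i ≠ j → x i ≠ x j)
    (hb : ∀ (i : Fin n), ∀ k ∈ Finset.Icc 1 n, 1 - b k * x i ≠ 0) :
    (∏ i : Fin n, (x i + y i)) *
      (∏ p ∈ Finset.univ.filter (fun p : Fin n × Fin n => p.1 < p.2),
          ((x p.1 + y p.2) / (x p.1 - x p.2))) *
      Matrix.det (Matrix.of fun i j : Fin n =>
        (∏ k ∈ Finset.Icc 1 (n - (j.val + 1)), (x i - a k)) /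
        (∏ k ∈ Finset.Icc 1 (n - j.val), (1 - b k * x i))) *
      (∏ i : Fin n, ∏ j : Fin n, (1 - b (j.val + 1) * x i)) =
    (∏ i : Fin n, (x i + y i)) *
      (∏ p ∈ Finset.univ.filter (fun p : Fin n × Fin n => p.1 < p.2),
          ((x p.1 + y p.2) * (1 - a (p.1.val + 1) * b (p.2.val + 1)))) := by
  set S := Finset.univ.filter (fun p : Fin n × Fin n => p.1 < p.2) with hS
  set M : Matrix (Fin n) (Fin n) F := Matrix.of fun i j : Fin n =>
      (∏ k ∈ Finset.Icc 1 (n - (j.val + 1)), (x i - a k)) /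
      (∏ k ∈ Finset.Icc 1 (n - j.val), (1 - b k * x i)) with hM
  -- rewrite the extra product over all (i,j)
  have hrow : ∀ i : Fin n, (∏ j : Fin n, (1 - b (j.val + 1) * x i)) =
      ∏ k ∈ Finset.Icc 1 n, (1 - b k * x i) := by
    intro i
    rw [Fin.prod_univ_eq_prod_range (fun j => 1 - b (j + 1) * x i) n]
    refine Finset.prod_nbij' (fun j => j + 1) (fun k => k - 1) ?_ ?_ ?_ ?_ ?_ <;>
      intros <;> simp_all <;> omega
  -- clear denominators in the determinant
  have hclear : Matrix.det M * (∏ i : Fin n, ∏ k ∈ Finset.Icc 1 n, (1 - b k * x i)) =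
      Matrix.det (Matrix.of fun i j : Fin n =>
        (∏ k ∈ Finset.Icc 1 (n - (j.val + 1)), (x i - a k)) *
          ∏ k ∈ Finset.Icc (n - j.val + 1) n, (1 - b k * x i)) := by
    rw [mul_comm, ← Matrix.det_mul_column (fun i => ∏ k ∈ Finset.Icc 1 n, (1 - b k * x i)) M]
    congr 1
    ext i j
    have hj := j.isLt
    have hIoc1 : Finset.Icc 1 n = Finset.Ioc 0 n := by ext k; simp; omega
    have hIoc2 : Finset.Icc 1 (n - j.val) = Finset.Ioc 0 (n - j.val) := by ext k; simp; omega
    have hIoc3 : Finset.Icc (n - j.val + 1) n = Finset.Ioc (n - j.val) n := by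
      ext k; simp
    have hne : (∏ k ∈ Finset.Ioc 0 (n - j.val), (1 - b k * x i)) ≠ 0 := by
      refine Finset.prod_ne_zero_iff.mpr (fun k hk => hb i k ?_)
      simp only [Finset.mem_Ioc] at hk
      simp only [Finset.mem_Icc]
      omega
    simp only [Matrix.of_apply, hM, hIoc1, hIoc2, hIoc3,
      ← Finset.prod_Ioc_consecutive (fun k => 1 - b k * x i) (Nat.zero_le (n - j.val))
        (Nat.sub_le n j.val)]
    field_simp
    simp only [mul_comm (x i)]
    rw [div_eq_iff hne]
    ring
  -- the determinant evaluation
  have hdet : Matrix.det (Matrix.of fun i j : Fin n =>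
        (∏ k ∈ Finset.Icc 1 (n - (j.val + 1)), (x i - a k)) *
          ∏ k ∈ Finset.Icc (n - j.val + 1) n, (1 - b k * x i)) =
      (∏ q ∈ S, (1 - a (q.1.val + 1) * b (q.2.val + 1))) * ∏ q ∈ S, (x q.1 - x q.2) := by
    rw [det_A_full x a b, prod_D a b, det_newton x a, ← prod_pairs (fun i j => x i - x j), hS]
  have key : Matrix.det M * (∏ i : Fin n, ∏ j : Fin n, (1 - b (j.val + 1) * x i)) =
      (∏ q ∈ S, (1 - a (q.1.val + 1) * b (q.2.val + 1))) * ∏ q ∈ S, (x q.1 - x q.2) := by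
    rw [Finset.prod_congr rfl (fun i _ => hrow i), hclear, hdet]
  have hPV : (∏ p ∈ S, ((x p.1 + y p.2) / (x p.1 - x p.2))) * (∏ q ∈ S, (x q.1 - x q.2)) =
      ∏ p ∈ S, (x p.1 + y p.2) := by
    rw [← Finset.prod_mul_distrib]
    refine Finset.prod_congr rfl (fun p hp => ?_)
    rw [hS, Finset.mem_filter] at hp
    exact div_mul_cancel₀ _ (sub_ne_zero.mpr (hx p.1 p.2 (ne_of_lt hp.2)))
  have hRHS : (∏ p ∈ S, ((x p.1 + y p.2) * (1 - a (p.1.val + 1) * b (p.2.val + 1)))) =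
      (∏ p ∈ S, (x p.1 + y p.2)) * ∏ q ∈ S, (1 - a (q.1.val + 1) * b (q.2.val + 1)) :=
    Finset.prod_mul_distrib
  calc (∏ i : Fin n, (x i + y i)) * (∏ p ∈ S, ((x p.1 + y p.2) / (x p.1 - x p.2))) *
        Matrix.det M * (∏ i : Fin n, ∏ j : Fin n, (1 - b (j.val + 1) * x i))
      = (∏ i : Fin n, (x i + y i)) * (∏ p ∈ S, ((x p.1 + y p.2) / (x p.1 - x p.2))) *
        (Matrix.det M * (∏ i : Fin n, ∏ j : Fin n, (1 - b (j.val + 1) * x i))) := by ring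
    _ = (∏ i : Fin n, (x i + y i)) *
        (((∏ p ∈ S, ((x p.1 + y p.2) / (x p.1 - x p.2))) * ∏ q ∈ S, (x q.1 - x q.2)) *
          ∏ q ∈ S, (1 - a (q.1.val + 1) * b (q.2.val + 1))) := by rw [key]; ring
    _ = (∏ i : Fin n, (x i + y i)) *
        ((∏ p ∈ S, (x p.1 + y p.2)) * ∏ q ∈ S, (1 - a (q.1.val + 1) * b (q.2.val + 1))) := by
          rw [hPV]
    _ = _ := by rw [← hRHS]
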